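/- For every permutation π = π_1⋯π_n ∈ S_n with a tail-bound descent d, the fertility of π satisfies |s^{-1}(π)| = Σ_{H ∈ SW_d(π)} |s^{-1}(π_U^H)| · |s^{-1}(π_S^H)| (the Decomposition Lemma). -/

import Mathlib

/-- West's stack-sorting map, implemented with fuel (fuel = length suffices). -/
def ssAux : ℕ → List ℕ → List ℕ
  | 0, _ => []
  | _ + 1, [] => []
  | fuel + 1, l =>
    let m := l.foldr max 0
    let i := l.idxOf m
    ssAux fuel (l.take i) ++ ssAux fuel (l.drop (i + 1)) ++ [m]

/-- West's stack-sorting map `s`. -/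
def stackSort (l : List ℕ) : List ℕ := ssAux l.length l

/-- `σ` contains the classical pattern `τ`. -/
def Contains (τ σ : List ℕ) : Prop :=
  ∃ f : Fin τ.length → Fin σ.length, StrictMono f ∧
    ∀ i j : Fin τ.length, τ.get i < τ.get j ↔ σ.get (f i) < σ.get (f j)

/-- `σ` avoids the classical pattern `τ`. -/
def Avoids (σ τ : List ℕ) : Prop := ¬ Contains τ σ

/-- The tail length of a permutation `π` of `[n]` (as a list, 1-indexed entries): the
smallest `ℓ ≥ 0` such that `π_{n-ℓ} ≠ n-ℓ`, with the tail length of the identity equal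
to `n`. -/
noncomputable def tailLen (n : ℕ) (π : List ℕ) : ℕ :=
  sInf {ℓ : ℕ | ℓ = n ∨ π.getD (n - ℓ - 1) 0 ≠ n - ℓ}

/-- The fertility of `π`: the number of preimages of `π` under the stack-sorting map. -/
noncomputable def fert (π : List ℕ) : ℕ := Nat.card {σ : List ℕ // stackSort σ = π}

lemma ssAux_cons (fuel : ℕ) (x : ℕ) (xs : List ℕ) :
    ssAux (fuel+1) (x::xs) =
      ssAux fuel ((x::xs).take ((x::xs).idxOf ((x::xs).foldr max 0))) ++
      ssAux fuel ((x::xs).drop ((x::xs).idxOf ((x::xs).foldr max 0) + 1)) ++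
      [(x::xs).foldr max 0] := rfl

lemma foldr_max_mem (l : List ℕ) (h : l ≠ []) : l.foldr max 0 ∈ l := by
  induction l with
  | nil => simp at h
  | cons x xs ih =>
    rcases eq_or_ne xs [] with rfl | hxs
    · simp
    · simp only [List.foldr_cons]
      rcases le_total x (xs.foldr max 0) with h1 | h1
      · rw [max_eq_right h1]; exact List.mem_cons_of_mem _ (ih hxs)
      · rw [max_eq_left h1]; exact List.mem_cons_self

lemma le_foldr_max {l : List ℕ} {x : ℕ} (h : x ∈ l) : x ≤ l.foldr max 0 := by
  induction l with
  | nil => simp at h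
  | cons y ys ih =>
    rcases List.mem_cons.mp h with h | h
    · simp [h]
    · exact le_trans (ih h) (le_max_right _ _)

lemma foldr_max_le {l : List ℕ} {m : ℕ} (h : ∀ x ∈ l, x ≤ m) : l.foldr max 0 ≤ m := by
  induction l with
  | nil => simp
  | cons y ys ih =>
    simp only [List.foldr_cons, max_le_iff]
    exact ⟨h y (by simp), ih fun x hx => h x (by simp [hx])⟩

lemma ssAux_congr : ∀ (f1 : ℕ), ∀ (f2 : ℕ) (l : List ℕ), l.length ≤ f1 → l.length ≤ f2 →
    ssAux f1 l = ssAux f2 l := by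
  intro f1
  induction f1 with
  | zero => intro f2 l h1 h2
            have : l = [] := List.length_eq_zero_iff.mp (Nat.le_zero.mp h1)
            subst this
            cases f2 <;> rfl
  | succ f ih =>
    intro f2 l h1 h2
    cases l with
    | nil => cases f2 <;> rfl
    | cons x xs =>
      cases f2 with
      | zero => simp at h2
      | succ g =>
        rw [ssAux_cons, ssAux_cons]
        have hmem := foldr_max_mem (x::xs) (by simp)
        have hi : (x::xs).idxOf ((x::xs).foldr max 0) < (x::xs).length :=
          List.idxOf_lt_length_iff.mpr hmem
        set i := (x::xs).idxOf ((x::xs).foldr max 0) with hidef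
        have h1' : ((x::xs).take i).length ≤ f := by
          rw [List.length_take]; omega
        have h2' : ((x::xs).take i).length ≤ g := by
          rw [List.length_take]; omega
        have h3' : ((x::xs).drop (i+1)).length ≤ f := by
          rw [List.length_drop]; omega
        have h4' : ((x::xs).drop (i+1)).length ≤ g := by
          rw [List.length_drop]; omega
        rw [ih g _ h1' h2', ih g _ h3' h4']

lemma ssAux_stackSort {f : ℕ} {l : List ℕ} (h : l.length ≤ f) : ssAux f l = stackSort l :=
  ssAux_congr f l.length l h le_rfl

lemma stackSort_nil : stackSort [] = [] := rfl

lemma stackSort_cons_eq (x : ℕ) (xs : List ℕ) :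
    stackSort (x::xs) =
      stackSort ((x::xs).take ((x::xs).idxOf ((x::xs).foldr max 0))) ++
      stackSort ((x::xs).drop ((x::xs).idxOf ((x::xs).foldr max 0) + 1)) ++
      [(x::xs).foldr max 0] := by
  have hmem := foldr_max_mem (x::xs) (by simp)
  have hi : (x::xs).idxOf ((x::xs).foldr max 0) < (x::xs).length :=
    List.idxOf_lt_length_iff.mpr hmem
  set i := (x::xs).idxOf ((x::xs).foldr max 0) with hidef
  simp only [List.length_cons] at hi
  rw [stackSort, List.length_cons, ssAux_cons]
  rw [ssAux_stackSort (by rw [List.length_take, List.length_cons]; omega),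
      ssAux_stackSort (by rw [List.length_drop, List.length_cons]; omega)]


lemma stackSort_eq_of_ne_nil (l : List ℕ) (h : l ≠ []) :
    stackSort l =
      stackSort (l.take (l.idxOf (l.foldr max 0))) ++
      stackSort (l.drop (l.idxOf (l.foldr max 0) + 1)) ++
      [l.foldr max 0] := by
  cases l with
  | nil => exact absurd rfl h
  | cons x xs => exact stackSort_cons_eq x xs

lemma stackSort_perm : ∀ (l : List ℕ), (stackSort l).Perm l := by
  have H : ∀ (n : ℕ) (l : List ℕ), l.length ≤ n → (stackSort l).Perm l := by
    intro n
    induction n with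
    | zero => intro l h
              have : l = [] := List.length_eq_zero_iff.mp (Nat.le_zero.mp h)
              subst this; rfl
    | succ n ih =>
      intro l h
      rcases eq_or_ne l [] with rfl | hne
      · rfl
      · have hmem := foldr_max_mem l hne
        have hi : l.idxOf (l.foldr max 0) < l.length := List.idxOf_lt_length_iff.mpr hmem
        set i := l.idxOf (l.foldr max 0) with hidef
        set m := l.foldr max 0 with hmdef
        have hdecomp : l = l.take i ++ m :: l.drop (i + 1) := by
          conv_lhs => rw [← List.take_append_drop i l]
          congr 1
          rw [List.drop_eq_getElem_cons hi]
          congr 1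
          exact List.getElem_idxOf hi
        rw [stackSort_eq_of_ne_nil l hne]
        have h1 : (stackSort (l.take i)).Perm (l.take i) :=
          ih _ (by rw [List.length_take]; omega)
        have h2 : (stackSort (l.drop (i+1))).Perm (l.drop (i+1)) :=
          ih _ (by rw [List.length_drop]; omega)
        have hp1 : (stackSort (l.take i) ++ stackSort (l.drop (i+1)) ++ [m]).Perm
            (l.take i ++ l.drop (i+1) ++ [m]) := (h1.append h2).append (List.Perm.refl _)
        refine hp1.trans ?_
        conv_rhs => rw [hdecomp]
        rw [List.append_assoc]
        refine List.Perm.append_left _ ?_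
        exact List.perm_append_comm
  intro l; exact H l.length l le_rfl

lemma stackSort_length (l : List ℕ) : (stackSort l).length = l.length :=
  (stackSort_perm l).length_eq

lemma stackSort_append_of_max {L R : List ℕ} {m : ℕ}
    (hL : ∀ y ∈ L, y < m) (hR : ∀ y ∈ R, y < m) :
    stackSort (L ++ m :: R) = stackSort L ++ stackSort R ++ [m] := by
  set l := L ++ m :: R with hl
  have hne : l ≠ [] := by simp [hl]
  have hmax : l.foldr max 0 = m := by
    refine le_antisymm (foldr_max_le ?_) (le_foldr_max (by simp [hl]))
    intro x hx
    rw [hl, List.mem_append, List.mem_cons] at hx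
    rcases hx with hx | hx | hx
    · exact le_of_lt (hL x hx)
    · exact le_of_eq hx
    · exact le_of_lt (hR x hx)
  have hnotmem : m ∉ L := fun hm => lt_irrefl m (hL m hm)
  have hidx : l.idxOf m = L.length := by
    rw [hl, List.idxOf_append_of_notMem hnotmem]
    simp
  have htake : l.take (L.length) = L := by rw [hl]; exact List.take_left
  have hdrop : l.drop (L.length + 1) = R := by
    rw [hl]
    have : L.length + 1 = L.length + [m].length := by simp
    rw [show L ++ m :: R = (L ++ [m]) ++ R by simp, show L.length + 1 = (L ++ [m]).length by simp]
    exact List.drop_left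
  rw [stackSort_eq_of_ne_nil l hne, hmax, hidx, htake, hdrop]

lemma perm_foldr_max {l₁ l₂ : List ℕ} (h : l₁.Perm l₂) : l₁.foldr max 0 = l₂.foldr max 0 := by
  induction h with
  | nil => rfl
  | cons x h ih => simp [ih]
  | swap x y l => exact max_left_comm _ _ _
  | trans h1 h2 ih1 ih2 => rw [ih1, ih2]

lemma fert_nil : fert [] = 1 := by
  rw [fert]
  have : ∀ σ : List ℕ, stackSort σ = [] ↔ σ = [] := by
    intro σ
    constructor
    · intro h
      have := stackSort_length σ
      rw [h] at this
      exact List.length_eq_zero_iff.mp this.symm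
    · rintro rfl; rfl
  rw [Nat.card_eq_one_iff_unique]
  constructor
  · constructor
    intro a b
    ext1
    rw [(this a.1).mp a.2, (this b.1).mp b.2]
  · exact ⟨⟨[], rfl⟩⟩

lemma fert_eq_zero_of_last_ne (w : List ℕ) (h : w ≠ [])
    (hne : w.getD (w.length - 1) 0 ≠ w.foldr max 0) : fert w = 0 := by
  rw [fert]
  have : IsEmpty {σ : List ℕ // stackSort σ = w} := by
    constructor
    rintro ⟨σ, hσ⟩
    have hσne : σ ≠ [] := by
      intro e; subst e; exact h hσ.symm
    have hperm : σ.Perm w := by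
      have := stackSort_perm σ; rw [hσ] at this; exact this.symm
    have hthis := stackSort_eq_of_ne_nil σ hσne
    rw [hσ] at hthis
    obtain ⟨pre, hpre⟩ : ∃ pre, w = pre ++ [σ.foldr max 0] := ⟨_, hthis⟩
    have hlast : w.getD (w.length - 1) 0 = σ.foldr max 0 := by
      rw [hpre, List.length_append, List.length_singleton, Nat.add_sub_cancel,
        List.getD_append_right _ _ _ _ le_rfl, Nat.sub_self]
      rfl
    rw [perm_foldr_max hperm] at hlast
    exact hne hlast
  simp [Nat.card_of_isEmpty]

lemma fert_finite (π : List ℕ) : Finite {σ : List ℕ // stackSort σ = π} := by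
  have : ∀ σ : List ℕ, stackSort σ = π → σ ∈ π.permutations := by
    intro σ h
    rw [List.mem_permutations]
    exact h ▸ (stackSort_perm σ).symm
  have h2 : {σ : List ℕ | stackSort σ = π} ⊆ {σ | σ ∈ π.permutations} := this
  have h3 : {σ : List ℕ | σ ∈ π.permutations}.Finite := π.permutations.finite_toSet
  exact (h3.subset h2)


lemma mem_take_indexOf : ∀ {l : List ℕ} {x : ℕ} {i : ℕ}, x ∈ l.take i → l.idxOf x < i := by
  intro l
  induction l with
  | nil => intro x i h; simp at h
  | cons y ys ih =>
    intro x i h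
    cases i with
    | zero => simp at h
    | succ j =>
      rcases eq_or_ne y x with rfl | hne
      · rw [List.idxOf_cons_self]; omega
      · rw [List.idxOf_cons_ne _ hne]
        rw [List.take_succ_cons, List.mem_cons] at h
        rcases h with h | h
        · exact absurd h.symm hne
        · have := ih h; omega

lemma append_cons_inj {L L' R R' : List ℕ} {m : ℕ} (hL : m ∉ L) (hL' : m ∉ L')
    (h : L ++ m :: R = L' ++ m :: R') : L = L' ∧ R = R' := by
  have h1 : (L ++ m :: R).idxOf m = L.length := by
    rw [List.idxOf_append_of_notMem hL, List.idxOf_cons_self]; omega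
  have h2 : (L' ++ m :: R').idxOf m = L'.length := by
    rw [List.idxOf_append_of_notMem hL', List.idxOf_cons_self]; omega
  rw [h] at h1
  have hlen : L.length = L'.length := by rw [h1] at h2; exact h2
  obtain ⟨e1, e2⟩ := List.append_inj h hlen
  exact ⟨e1, by injection e2⟩

lemma fert_append_max (u : List ℕ) (m : ℕ) (hu : ∀ x ∈ u, x < m) :
    fert (u ++ [m]) = ∑ k ∈ Finset.range (u.length + 1), fert (u.take k) * fert (u.drop k) := by
  classical
  haveI hfL : ∀ k : ℕ, Finite {L : List ℕ // stackSort L = u.take k} := fun k => fert_finite _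
  haveI hfR : ∀ k : ℕ, Finite {R : List ℕ // stackSort R = u.drop k} := fun k => fert_finite _
  haveI hf0 : Finite {σ : List ℕ // stackSort σ = u ++ [m]} := fert_finite _
  have hg : ∀ x : (Σ k : Fin (u.length + 1),
      {L : List ℕ // stackSort L = u.take (k:ℕ)} × {R : List ℕ // stackSort R = u.drop (k:ℕ)}),
      stackSort (x.2.1.1 ++ m :: x.2.2.1) = u ++ [m] := by
    rintro ⟨k, ⟨L, hL⟩, ⟨R, hR⟩⟩
    have hLperm : L.Perm (u.take (k:ℕ)) := by
      have := stackSort_perm L; rw [hL] at this; exact this.symm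
    have hRperm : R.Perm (u.drop (k:ℕ)) := by
      have := stackSort_perm R; rw [hR] at this; exact this.symm
    have hLm : ∀ y ∈ L, y < m := fun y hy =>
      hu y (List.take_subset _ _ (hLperm.subset hy))
    have hRm : ∀ y ∈ R, y < m := fun y hy =>
      hu y (List.drop_subset _ _ (hRperm.subset hy))
    rw [stackSort_append_of_max hLm hRm, hL, hR, List.take_append_drop]
  set T := (Σ k : Fin (u.length + 1),
      {L : List ℕ // stackSort L = u.take (k:ℕ)} × {R : List ℕ // stackSort R = u.drop (k:ℕ)})
    with hT
  have hnotmem : ∀ (k : ℕ) (L : List ℕ), stackSort L = u.take k → m ∉ L := by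
    intro k L hL hm
    have hLperm : L.Perm (u.take k) := by
      have := stackSort_perm L; rw [hL] at this; exact this.symm
    exact lt_irrefl m (hu m (List.take_subset _ _ (hLperm.subset hm)))
  have hlenL : ∀ (k : Fin (u.length + 1)) (L : List ℕ), stackSort L = u.take (k:ℕ) →
      L.length = (k:ℕ) := by
    intro k L hL
    have := stackSort_length L
    rw [hL, List.length_take] at this
    omega
  have key : Nat.card {σ : List ℕ // stackSort σ = u ++ [m]} = Nat.card T := by
    refine (Nat.card_congr (Equiv.ofBijective
      (fun x : T => (⟨x.2.1.1 ++ m :: x.2.2.1, hg x⟩ : {σ : List ℕ // stackSort σ = u ++ [m]}))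
      ⟨?_, ?_⟩)).symm
    · rintro ⟨k, ⟨L, hL⟩, ⟨R, hR⟩⟩ ⟨k', ⟨L', hL'⟩, ⟨R', hR'⟩⟩ heq
      simp only [Subtype.mk.injEq] at heq
      obtain ⟨e1, e2⟩ := append_cons_inj (hnotmem _ _ hL) (hnotmem _ _ hL') heq
      have hk : k = k' := by
        have a1 := hlenL k L hL
        have a2 := hlenL k' L' hL'
        apply Fin.ext
        rw [← a1, ← a2, e1]
      subst hk; subst e1; subst e2
      rfl
    · rintro ⟨σ, hσ⟩
      have hσlen : σ.length = u.length + 1 := by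
        have := stackSort_length σ
        rw [hσ, List.length_append, List.length_singleton] at this; omega
      have hσne : σ ≠ [] := by
        intro e; rw [e] at hσlen; simp at hσlen
      have hperm : σ.Perm (u ++ [m]) := by
        have := stackSort_perm σ; rw [hσ] at this; exact this.symm
      have hmem : m ∈ σ := hperm.mem_iff.mpr (by simp)
      have hi : σ.idxOf m < σ.length := List.idxOf_lt_length_iff.mpr hmem
      set i := σ.idxOf m with hidef
      set L := σ.take i with hLdef
      set R := σ.drop (i + 1) with hRdef
      have hdecomp : σ = L ++ m :: R := by
        conv_lhs => rw [← List.take_append_drop i σ]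
        congr 1
        rw [List.drop_eq_getElem_cons hi]
        congr 1
        exact List.getElem_idxOf hi
      have hLlen : L.length = i := by rw [hLdef, List.length_take]; omega
      have hLm : ∀ y ∈ L, y < m := by
        intro y hy
        have hyσ : y ∈ σ := List.take_subset _ _ hy
        have : y ∈ u ++ [m] := hperm.subset hyσ
        rcases List.mem_append.mp this with h' | h'
        · exact hu y h'
        · exfalso
          have : y = m := by simpa using h'
          subst this
          exact lt_irrefl i (mem_take_indexOf hy)
      have hmnotu : m ∉ u := fun hm => lt_irrefl m (hu m hm)
      have hcount : σ.count m = 1 := by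
        rw [hperm.count_eq, List.count_append]
        simp [List.count_eq_zero_of_not_mem hmnotu]
      have hmR : m ∉ R := by
        intro hm
        rw [hdecomp, List.count_append, List.count_cons_self] at hcount
        have := List.count_pos_iff.mpr hm
        omega
      have hRm : ∀ y ∈ R, y < m := by
        intro y hy
        have hyσ : y ∈ σ := List.drop_subset _ _ hy
        have : y ∈ u ++ [m] := hperm.subset hyσ
        rcases List.mem_append.mp this with h' | h'
        · exact hu y h'
        · exfalso; have : y = m := by simpa using h'
          subst this; exact hmR hy
      have hsplit : stackSort L ++ stackSort R ++ [m] = u ++ [m] := by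
        rw [← stackSort_append_of_max hLm hRm, ← hdecomp, hσ]
      have hcancel : stackSort L ++ stackSort R = u :=
        List.append_cancel_right hsplit
      have hSLlen : (stackSort L).length = i := by rw [stackSort_length, hLlen]
      have hile : i ≤ u.length := by
        have : (stackSort L ++ stackSort R).length = u.length := by rw [hcancel]
        rw [List.length_append, hSLlen] at this
        omega
      have hLtake : stackSort L = u.take i := by
        rw [← hcancel, List.take_append_of_le_length (by rw [hSLlen]), ← hSLlen,
          List.take_length]
      have hRdrop : stackSort R = u.drop i := by
        rw [← hcancel, ← hSLlen, List.drop_left]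
      refine ⟨⟨⟨i, by omega⟩, ⟨L, hLtake⟩, ⟨R, hRdrop⟩⟩, ?_⟩
      exact Subtype.ext hdecomp.symm
  haveI iL : ∀ k : ℕ, Fintype {L : List ℕ // stackSort L = u.take k} :=
    fun k => Fintype.ofFinite _
  haveI iR : ∀ k : ℕ, Fintype {R : List ℕ // stackSort R = u.drop k} :=
    fun k => Fintype.ofFinite _
  rw [fert, key, hT, Nat.card_eq_fintype_card, Fintype.card_sigma]
  rw [Fin.sum_univ_eq_sum_range
    (fun k => Fintype.card ({L : List ℕ // stackSort L = u.take k} × {R : List ℕ // stackSort R = u.drop k}))]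
  refine Finset.sum_congr rfl ?_
  intro k _
  rw [Fintype.card_prod, fert, fert, Nat.card_eq_fintype_card, Nat.card_eq_fintype_card]


lemma getD_eq_getElem' {w : List ℕ} {i : ℕ} (h : i < w.length) : w.getD i 0 = w[i] :=
  List.getD_eq_getElem w 0 h

lemma getD_of_ge {w : List ℕ} {i : ℕ} (h : w.length ≤ i) : w.getD i 0 = 0 :=
  List.getD_eq_default w 0 h

lemma getD_take {w : List ℕ} {k i : ℕ} (h : i < k) : (w.take k).getD i 0 = w.getD i 0 := by
  rcases lt_or_ge i w.length with h1 | h1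
  · rw [getD_eq_getElem' (by rw [List.length_take]; omega), getD_eq_getElem' h1]
    exact List.getElem_take
  · rw [getD_of_ge (by rw [List.length_take]; omega), getD_of_ge h1]

lemma getD_drop {w : List ℕ} {k i : ℕ} : (w.drop k).getD i 0 = w.getD (k + i) 0 := by
  rcases lt_or_ge (k + i) w.length with h1 | h1
  · rw [getD_eq_getElem' (by rw [List.length_drop]; omega), getD_eq_getElem' h1]
    exact List.getElem_drop
  · rw [getD_of_ge (by rw [List.length_drop]; omega), getD_of_ge h1]

lemma getD_append_left {a b : List ℕ} {i : ℕ} (h : i < a.length) :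
    (a ++ b).getD i 0 = a.getD i 0 :=
  List.getD_append a b 0 i h

lemma getD_append_right' {a b : List ℕ} {i : ℕ} (h : a.length ≤ i) :
    (a ++ b).getD i 0 = b.getD (i - a.length) 0 :=
  List.getD_append_right a b 0 i h

lemma list_eq_of_getD {x y : List ℕ} (hlen : x.length = y.length)
    (h : ∀ i, i < x.length → x.getD i 0 = y.getD i 0) : x = y := by
  apply List.ext_getElem hlen
  intro i h1 h2
  have := h i h1
  rwa [getD_eq_getElem' h1, getD_eq_getElem' h2] at this

lemma getD_mem {w : List ℕ} {i : ℕ} (h : i < w.length) : w.getD i 0 ∈ w := by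
  rw [getD_eq_getElem' h]; exact List.getElem_mem _

lemma mem_iff_getD {w : List ℕ} {y : ℕ} : y ∈ w ↔ ∃ i, i < w.length ∧ w.getD i 0 = y := by
  constructor
  · intro h
    obtain ⟨i, hi, he⟩ := List.mem_iff_getElem.mp h
    exact ⟨i, hi, by rw [getD_eq_getElem' hi, he]⟩
  · rintro ⟨i, hi, rfl⟩; exact getD_mem hi

lemma nodup_getD_ne {w : List ℕ} (hnd : w.Nodup) {i j : ℕ} (hij : i ≠ j)
    (hi : i < w.length) (hj : j < w.length) : w.getD i 0 ≠ w.getD j 0 := by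
  rw [getD_eq_getElem' hi, getD_eq_getElem' hj]
  intro h
  exact hij (by
    have := List.Nodup.getElem_inj_iff hnd (hi := hi) (hj := hj)
    exact this.mp h)

lemma eq_take_append_last (w : List ℕ) (h : w ≠ []) :
    w = w.take (w.length - 1) ++ [w.getD (w.length - 1) 0] := by
  have hlen : w.length ≠ 0 := fun e => h (List.length_eq_zero_iff.mp e)
  refine list_eq_of_getD ?_ ?_
  · rw [List.length_append, List.length_take, List.length_singleton]; omega
  · intro i hi
    rcases lt_or_ge i (w.length - 1) with h1 | h1
    · rw [getD_append_left (by rw [List.length_take]; omega), getD_take h1]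
    · have hieq : i = w.length - 1 := by omega
      subst hieq
      rw [getD_append_right' (by rw [List.length_take]; omega)]
      rw [List.length_take]
      simp only [min_eq_left (by omega : w.length - 1 ≤ w.length), Nat.sub_self]
      rfl


def seg (w : List ℕ) (a b : ℕ) : List ℕ := (w.drop a).take b

lemma length_seg (w : List ℕ) (a b : ℕ) : (seg w a b).length = min b (w.length - a) := by
  simp [seg, List.length_take, List.length_drop]

lemma getD_seg {w : List ℕ} {a b i : ℕ} (h : i < b) : (seg w a b).getD i 0 = w.getD (a+i) 0 := by
  rw [seg, getD_take h, getD_drop]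

lemma take_eq_seg (w : List ℕ) (k : ℕ) : w.take k = seg w 0 k := by rw [seg, List.drop_zero]

lemma drop_eq_seg (w : List ℕ) (a : ℕ) : w.drop a = seg w a (w.length - a) := by
  rw [seg, ← List.length_drop, List.take_length]

lemma seg_take (w : List ℕ) (a b c : ℕ) : (seg w a b).take c = seg w a (min c b) := by
  rw [seg, seg, List.take_take]

lemma seg_drop (w : List ℕ) (a b c : ℕ) : (seg w a b).drop c = seg w (a+c) (b-c) := by
  rw [seg, seg, List.drop_take, List.drop_drop]

lemma seg_sublist (w : List ℕ) (a b : ℕ) : (seg w a b).Sublist w :=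
  (List.take_sublist _ _).trans (List.drop_sublist _ _)

lemma seg_zero (w : List ℕ) (a : ℕ) : seg w a 0 = [] := by rw [seg, List.take_zero]

lemma seg_congr (w : List ℕ) {a a' b b' : ℕ} (h1 : a = a') (h2 : b = b') :
    seg w a b = seg w a' b' := by rw [h1, h2]

lemma getD_seg0 {w : List ℕ} {b i : ℕ} (h : i < b) : (seg w 0 b).getD i 0 = w.getD i 0 := by
  rw [getD_seg h, Nat.zero_add]

lemma fert_mul_congr {x1 x2 y1 y2 z1 z2 : List ℕ} (h1 : x1 = x2) (h2 : y1 = y2) (h3 : z1 = z2) :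
    fert (x1 ++ y1) * fert z1 = fert (x2 ++ y2) * fert z2 := by rw [h1, h2, h3]


theorem genDecomp : ∀ (n : ℕ), ∀ (w : List ℕ) (t d : ℕ),
    w.length = n → w.Nodup → t ≤ n →
    (∀ i j, i < n - t → n - t ≤ j → j < n → w.getD i 0 < w.getD j 0) →
    (∀ i j, n - t ≤ i → i < j → j < n → w.getD i 0 < w.getD j 0) →
    d + 1 < n → w.getD (d+1) 0 < w.getD d 0 →
    (∀ j, d < j → j < n → w.getD d 0 < w.getD j 0 → n - t ≤ j) →
    fert w = ∑ j ∈ Finset.Ico (n - t) n,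
      fert (w.take (d+1) ++ w.drop (j+1)) * fert ((w.drop (d+1)).take (j - d - 1)) := by
  intro n
  induction n using Nat.strong_induction_on with
  | _ n IH =>
  intro w t d hw hnd ht H2 H3 hdn hdesc H5
  rcases Nat.eq_zero_or_pos t with rfl | ht1
  · -- t = 0 : both sides are 0
    have hwne : w ≠ [] := by
      intro e; rw [e] at hw; simp at hw; omega
    have hz : fert w = 0 := by
      apply fert_eq_zero_of_last_ne w hwne
      rw [hw]
      intro hEq
      have h1 : w.getD d 0 ≤ w.foldr max 0 := le_foldr_max (getD_mem (by omega))
      have h2 : ¬ (w.getD d 0 < w.getD (n-1) 0) := fun hc => by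
        have := H5 (n-1) (by omega) (by omega) hc; omega
      have h3 : w.getD (n-1) 0 ≠ w.getD d 0 :=
        nodup_getD_ne hnd (by omega) (by omega) (by omega)
      rw [hEq] at h2 h3
      omega
    rw [hz, Nat.sub_zero, Finset.Ico_self, Finset.sum_empty]
  -- main case t ≥ 1
  have hwne : w ≠ [] := by
    intro e; rw [e] at hw; simp at hw; omega
  have hd2 : d + 2 ≤ n - t := by
    by_contra hcon
    push_neg at hcon
    rcases le_or_gt (n - t) d with hle | hlt
    · exact absurd (H3 d (d+1) hle (by omega) hdn) (by omega)
    · exact absurd (H2 d (d+1) (by omega) (by omega) hdn) (by omega)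
  have hmmax : ∀ i, i < n - 1 → w.getD i 0 < w.getD (n-1) 0 := by
    intro i hi
    rcases lt_or_ge i (n - t) with h1 | h1
    · exact H2 i (n-1) h1 (by omega) (by omega)
    · exact H3 i (n-1) h1 (by omega) (by omega)
  have hsegmax : ∀ (a b : ℕ), a + b ≤ n - 1 → ∀ x ∈ seg w a b, x < w.getD (n-1) 0 := by
    intro a b hab x hx
    obtain ⟨i, hi, he⟩ := mem_iff_getD.mp hx
    rw [length_seg] at hi
    rw [getD_seg (by omega)] at he
    rw [← he]
    exact hmmax (a + i) (by omega)
  -- the fundamental recursion for fert w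
  have hrec : fert w = ∑ k ∈ Finset.range n,
      fert (seg w 0 k) * fert (seg w k (n-1-k)) := by
    have hulen : (w.take (n-1)).length = n - 1 := by rw [List.length_take, hw]; omega
    have hdecomp : w = w.take (n-1) ++ [w.getD (n-1) 0] := by
      have := eq_take_append_last w hwne
      rwa [hw] at this
    have humax : ∀ x ∈ w.take (n-1), x < w.getD (n-1) 0 := by
      intro x hx
      rw [take_eq_seg] at hx
      exact hsegmax 0 (n-1) (by omega) x hx
    conv_lhs => rw [hdecomp]
    rw [fert_append_max _ _ humax, hulen]
    have hrange : n - 1 + 1 = n := by omega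
    rw [hrange]
    refine Finset.sum_congr rfl (fun k hk => ?_)
    rw [Finset.mem_range] at hk
    rw [take_eq_seg w (n-1), seg_take, seg_drop]
    congr 2
    · exact seg_congr w rfl (by omega)
    · exact seg_congr w (by omega) rfl
  -- Block3 : zero terms
  have hAzero : ∀ k, d + 2 ≤ k → k ≤ n - t → fert (seg w 0 k) = 0 := by
    intro k h1 h2
    have hlen : (seg w 0 k).length = k := by rw [length_seg, hw]; omega
    have hne : seg w 0 k ≠ [] := by
      intro e; rw [e] at hlen; simp at hlen; omega
    apply fert_eq_zero_of_last_ne _ hne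
    rw [hlen]
    intro hEq
    have hdmem : w.getD d 0 ∈ seg w 0 k := by
      have h3 : (seg w 0 k).getD d 0 = w.getD d 0 := getD_seg0 (by omega)
      rw [← h3]; exact getD_mem (by omega)
    have hle : w.getD d 0 ≤ (seg w 0 k).foldr max 0 := le_foldr_max hdmem
    have hEq2 : (seg w 0 k).getD (k-1) 0 = w.getD (k-1) 0 := getD_seg0 (by omega)
    rw [hEq2] at hEq
    have hne2 : w.getD (k-1) 0 ≠ w.getD d 0 := nodup_getD_ne hnd (by omega) (by omega) (by omega)
    have hlt : w.getD d 0 < w.getD (k-1) 0 := by omega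
    have := H5 (k-1) (by omega) (by omega) hlt
    omega
  -- Block1 : IH applied to the B-words
  have hB : ∀ k, k ≤ d → fert (seg w k (n-1-k)) =
      ∑ j ∈ Finset.Ico (n-t) (n-1),
        fert (seg w k (d+1-k) ++ seg w (j+1) (n-2-j)) * fert (seg w (d+1) (j-d-1)) := by
    intro k hk
    have hlen : (seg w k (n-1-k)).length = n-1-k := by rw [length_seg, hw]; omega
    have hsub : (seg w k (n-1-k)).Nodup := (seg_sublist w k (n-1-k)).nodup hnd
    have key := IH (n-1-k) (by omega) (seg w k (n-1-k)) (t-1) (d-k) hlen hsub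
      (by omega)
      (by intro i j hi hj1 hj2
          rw [getD_seg (by omega), getD_seg (by omega)]
          exact H2 (k+i) (k+j) (by omega) (by omega) (by omega))
      (by intro i j hi hj1 hj2
          rw [getD_seg (by omega), getD_seg (by omega)]
          exact H3 (k+i) (k+j) (by omega) (by omega) (by omega))
      (by omega)
      (by rw [getD_seg (by omega), getD_seg (by omega)]
          have e1 : k + (d-k+1) = d+1 := by omega
          have e2 : k + (d-k) = d := by omega
          rw [e1, e2]
          exact hdesc)
      (by intro j hj1 hj2 hlt
          rw [getD_seg (by omega), getD_seg (by omega)] at hlt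
          have e2 : k + (d-k) = d := by omega
          rw [e2] at hlt
          have := H5 (k+j) (by omega) (by omega) hlt
          omega)
    rw [key]
    rw [Finset.sum_Ico_eq_sum_range, Finset.sum_Ico_eq_sum_range]
    have hr1 : (n-1-k) - ((n-1-k)-(t-1)) = t-1 := by omega
    have hr2 : (n-1) - (n-t) = t-1 := by omega
    rw [hr1, hr2]
    refine Finset.sum_congr rfl (fun r hr => ?_)
    rw [Finset.mem_range] at hr
    rw [seg_take, seg_drop, seg_drop, seg_take]
    exact fert_mul_congr (seg_congr w rfl (by omega)) (seg_congr w (by omega) (by omega))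
      (seg_congr w (by omega) (by omega))
  -- Block4 : IH applied to the A-words
  have hA : ∀ k, n-t+1 ≤ k → k < n → fert (seg w 0 k) =
      ∑ j ∈ Finset.Ico (n-t) k,
        fert (seg w 0 (d+1) ++ seg w (j+1) (k-1-j)) * fert (seg w (d+1) (j-d-1)) := by
    intro k hk1 hk2
    have hlen : (seg w 0 k).length = k := by rw [length_seg, hw]; omega
    have hsub : (seg w 0 k).Nodup := (seg_sublist w 0 k).nodup hnd
    have key := IH k (by omega) (seg w 0 k) (k-(n-t)) d hlen hsub
      (by omega)
      (by intro i j hi hj1 hj2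
          rw [getD_seg0 (by omega), getD_seg0 (by omega)]
          exact H2 i j (by omega) (by omega) (by omega))
      (by intro i j hi hj1 hj2
          rw [getD_seg0 (by omega), getD_seg0 (by omega)]
          exact H3 i j (by omega) (by omega) (by omega))
      (by omega)
      (by rw [getD_seg0 (by omega), getD_seg0 (by omega)]
          exact hdesc)
      (by intro j hj1 hj2 hlt
          rw [getD_seg0 (by omega), getD_seg0 (by omega)] at hlt
          have := H5 j (by omega) (by omega) hlt
          omega)
    rw [key]
    refine Finset.sum_congr ?_ (fun j hj => ?_)
    · congr 1
      omega
    · rw [Finset.mem_Ico] at hj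
      rw [seg_take, seg_drop, seg_drop, seg_take]
      exact fert_mul_congr (seg_congr w rfl (by omega)) (seg_congr w (by omega) (by omega))
        (seg_congr w (by omega) (by omega))
  -- recursion for the U-words
  have hU : ∀ j, n-t ≤ j → j < n-1 →
      fert (seg w 0 (d+1) ++ seg w (j+1) (n-1-j)) =
      (∑ k ∈ Finset.range (d+1),
        fert (seg w 0 k) * fert (seg w k (d+1-k) ++ seg w (j+1) (n-2-j)))
      + ∑ k ∈ Finset.Ico (j+1) n,
        fert (seg w 0 (d+1) ++ seg w (j+1) (k-1-j)) * fert (seg w k (n-1-k)) := by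
    intro j hj1 hj2
    set x := seg w 0 (d+1) with hx
    set y := seg w (j+1) (n-2-j) with hy
    have hxlen : x.length = d+1 := by rw [hx, length_seg, hw]; omega
    have hylen : y.length = n-2-j := by rw [hy, length_seg, hw]; omega
    have hsplit : seg w (j+1) (n-1-j) = y ++ [w.getD (n-1) 0] := by
      refine list_eq_of_getD ?_ ?_
      · rw [length_seg, hw, List.length_append, hylen, List.length_singleton]
        omega
      · intro i hi
        rw [length_seg, hw] at hi
        rcases lt_or_ge i (n-2-j) with h1 | h1
        · rw [getD_seg (by omega), getD_append_left (by rw [hylen]; omega), hy,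
            getD_seg (by omega)]
        · have hieq : i = n-2-j := by omega
          subst hieq
          rw [getD_seg (by omega), getD_append_right' (by rw [hylen]), hylen, Nat.sub_self]
          have e : j + 1 + (n-2-j) = n-1 := by omega
          rw [e]
          rfl
    have hVmax : ∀ z ∈ x ++ y, z < w.getD (n-1) 0 := by
      intro z hz
      rcases List.mem_append.mp hz with h | h
      · exact hsegmax 0 (d+1) (by omega) z (by rw [hx] at h; exact h)
      · exact hsegmax (j+1) (n-2-j) (by omega) z (by rw [hy] at h; exact h)
    rw [hsplit, ← List.append_assoc, fert_append_max _ _ hVmax]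
    rw [List.length_append, hxlen, hylen]
    rw [Finset.range_eq_Ico,
      ← Finset.sum_Ico_consecutive (fun k => fert ((x ++ y).take k) * fert ((x ++ y).drop k))
        (Nat.zero_le (d+1)) (by omega : d+1 ≤ (d+1)+(n-2-j)+1)]
    congr 1
    · rw [← Finset.range_eq_Ico]
      refine Finset.sum_congr rfl (fun k hk => ?_)
      rw [Finset.mem_range] at hk
      have e1 : (x ++ y).take k = seg w 0 k := by
        rw [List.take_append_of_le_length (by rw [hxlen]; omega), hx, seg_take]
        exact seg_congr w rfl (by omega)
      have e2 : (x ++ y).drop k = seg w k (d+1-k) ++ y := by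
        rw [List.drop_append_of_le_length (by rw [hxlen]; omega), hx, seg_drop]
        congr 1
        exact seg_congr w (by omega) rfl
      rw [e1, e2, hy]
    · rw [Finset.sum_Ico_eq_sum_range, Finset.sum_Ico_eq_sum_range]
      have er1 : (d+1)+(n-2-j)+1 - (d+1) = n - (j+1) := by omega
      rw [er1]
      refine Finset.sum_congr rfl (fun r hr => ?_)
      rw [Finset.mem_range] at hr
      have e1 : (x ++ y).take (d+1+r) = x ++ seg w (j+1) (j+1+r-1-j) := by
        rw [show d+1+r = x.length + r by rw [hxlen], List.take_length_add_append]
        congr 1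
        rw [hy, seg_take]
        exact seg_congr w rfl (by omega)
      have e2 : (x ++ y).drop (d+1+r) = seg w (j+1+r) (n-1-(j+1+r)) := by
        rw [show d+1+r = x.length + r by rw [hxlen], List.drop_length_add_append, hy, seg_drop]
        exact seg_congr w (by omega) (by omega)
      rw [e1, e2]
  -- canonical form of the claimed RHS
  have hcanon : ∑ j ∈ Finset.Ico (n - t) n,
      fert (w.take (d+1) ++ w.drop (j+1)) * fert ((w.drop (d+1)).take (j - d - 1)) =
      ∑ j ∈ Finset.Ico (n - t) n,
      fert (seg w 0 (d+1) ++ seg w (j+1) (n-1-j)) * fert (seg w (d+1) (j-d-1)) := by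
    refine Finset.sum_congr rfl (fun j hj => ?_)
    rw [Finset.mem_Ico] at hj
    have e : w.drop (j+1) = seg w (j+1) (n-1-j) := by
      rw [drop_eq_seg, hw]; congr 1; omega
    rw [e]
    rfl
  rw [hcanon]
  rw [hrec]
  have hIco : Finset.Ico (n-t) n = Finset.Ico (n-t) ((n-1)+1) := by
    rw [show n-1+1 = n by omega]
  have hz34 : ∑ k ∈ Finset.Ico (d+2) (n-t+1), fert (seg w 0 k) * fert (seg w k (n-1-k)) = 0 := by
    refine Finset.sum_eq_zero (fun k hk => ?_)
    rw [Finset.mem_Ico] at hk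
    rw [hAzero k (by omega) (by omega), zero_mul]
  have hP1 : ∑ k ∈ Finset.Ico 0 (d+1), fert (seg w 0 k) * fert (seg w k (n-1-k)) =
      ∑ j ∈ Finset.Ico (n-t) (n-1), ∑ k ∈ Finset.range (d+1), fert (seg w 0 k) * (fert (seg w k (d+1-k) ++ seg w (j+1) (n-2-j)) * fert (seg w (d+1) (j-d-1))) := by
    rw [← Finset.range_eq_Ico]
    have h1 : ∀ k ∈ Finset.range (d+1), fert (seg w 0 k) * fert (seg w k (n-1-k)) =
        ∑ j ∈ Finset.Ico (n-t) (n-1), fert (seg w 0 k) * (fert (seg w k (d+1-k) ++ seg w (j+1) (n-2-j)) * fert (seg w (d+1) (j-d-1))) := by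
      intro k hk
      rw [Finset.mem_range] at hk
      rw [hB k (by omega), Finset.mul_sum]
    rw [Finset.sum_congr rfl h1]
    exact Finset.sum_comm
  have hP3 : ∑ k ∈ Finset.Ico (n-t+1) n, fert (seg w 0 k) * fert (seg w k (n-1-k)) =
      ∑ j ∈ Finset.Ico (n-t) n, ∑ k ∈ Finset.Ico (j+1) n, fert (seg w 0 (d+1) ++ seg w (j+1) (k-1-j)) * fert (seg w (d+1) (j-d-1)) * fert (seg w k (n-1-k)) := by
    have h1 : ∀ k ∈ Finset.Ico (n-t+1) n, fert (seg w 0 k) * fert (seg w k (n-1-k)) =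
        ∑ j ∈ Finset.Ico (n-t) k, fert (seg w 0 (d+1) ++ seg w (j+1) (k-1-j)) * fert (seg w (d+1) (j-d-1)) * fert (seg w k (n-1-k)) := by
      intro k hk
      rw [Finset.mem_Ico] at hk
      rw [hA k (by omega) (by omega), Finset.sum_mul]
    rw [Finset.sum_congr rfl h1]
    have hext : ∑ k ∈ Finset.Ico (n-t) n, (∑ j ∈ Finset.Ico (n-t) k,
        fert (seg w 0 (d+1) ++ seg w (j+1) (k-1-j)) * fert (seg w (d+1) (j-d-1)) * fert (seg w k (n-1-k))) =
        ∑ k ∈ Finset.Ico (n-t+1) n, (∑ j ∈ Finset.Ico (n-t) k,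
        fert (seg w 0 (d+1) ++ seg w (j+1) (k-1-j)) * fert (seg w (d+1) (j-d-1)) * fert (seg w k (n-1-k))) := by
      rw [Finset.sum_eq_sum_Ico_succ_bot (show n-t < n by omega)]
      rw [Finset.Ico_self, Finset.sum_empty, zero_add]
    rw [← hext]
    exact (Finset.sum_Ico_Ico_comm' (n-t) n _).symm
  have hLHS : ∑ k ∈ Finset.range n, fert (seg w 0 k) * fert (seg w k (n-1-k)) =
      (∑ j ∈ Finset.Ico (n-t) (n-1), ∑ k ∈ Finset.range (d+1), fert (seg w 0 k) * (fert (seg w k (d+1-k) ++ seg w (j+1) (n-2-j)) * fert (seg w (d+1) (j-d-1)))) + ((fert (seg w 0 (d+1)) * fert (seg w (d+1) (n-1-(d+1)))) + (∑ j ∈ Finset.Ico (n-t) n, ∑ k ∈ Finset.Ico (j+1) n, fert (seg w 0 (d+1) ++ seg w (j+1) (k-1-j)) * fert (seg w (d+1) (j-d-1)) * fert (seg w k (n-1-k)))) := by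
    rw [Finset.range_eq_Ico,
      ← Finset.sum_Ico_consecutive (fun k => fert (seg w 0 k) * fert (seg w k (n-1-k))) (Nat.zero_le (d+1)) (show d+1 ≤ n by omega),
      Finset.sum_eq_sum_Ico_succ_bot (show d+1 < n by omega),
      show d+1+1 = d+2 by omega,
      ← Finset.sum_Ico_consecutive (fun k => fert (seg w 0 k) * fert (seg w k (n-1-k))) (show d+2 ≤ n-t+1 by omega) (show n-t+1 ≤ n by omega),
      hz34, zero_add, hP1, hP3]
  have hE3ext : (∑ j ∈ Finset.Ico (n-t) n, ∑ k ∈ Finset.Ico (j+1) n, fert (seg w 0 (d+1) ++ seg w (j+1) (k-1-j)) * fert (seg w (d+1) (j-d-1)) * fert (seg w k (n-1-k))) = ∑ j ∈ Finset.Ico (n-t) (n-1), ∑ k ∈ Finset.Ico (j+1) n, fert (seg w 0 (d+1) ++ seg w (j+1) (k-1-j)) * fert (seg w (d+1) (j-d-1)) * fert (seg w k (n-1-k)) := by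
    rw [hIco, Finset.sum_Ico_succ_top (show n-t ≤ n-1 by omega)]
    rw [show n-1+1 = n by omega, Finset.Ico_self, Finset.sum_empty, add_zero]
  have hM : (fert (seg w 0 (d+1) ++ seg w (n-1+1) (n-1-(n-1))) * fert (seg w (d+1) (n-1-d-1))) = fert (seg w 0 (d+1)) * fert (seg w (d+1) (n-1-(d+1))) := by
    have h1 : seg w (n-1+1) (n-1-(n-1)) = ([] : List ℕ) := by
      rw [show n-1-(n-1) = 0 by omega, seg_zero]
    rw [h1, List.append_nil]
    exact congrArg₂ _ rfl (congrArg fert (seg_congr w rfl (by omega)))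
  have hRHS : (∑ j ∈ Finset.Ico (n-t) n, fert (seg w 0 (d+1) ++ seg w (j+1) (n-1-j)) * fert (seg w (d+1) (j-d-1))) = ((∑ j ∈ Finset.Ico (n-t) (n-1), ∑ k ∈ Finset.range (d+1), fert (seg w 0 k) * (fert (seg w k (d+1-k) ++ seg w (j+1) (n-2-j)) * fert (seg w (d+1) (j-d-1)))) + (∑ j ∈ Finset.Ico (n-t) n, ∑ k ∈ Finset.Ico (j+1) n, fert (seg w 0 (d+1) ++ seg w (j+1) (k-1-j)) * fert (seg w (d+1) (j-d-1)) * fert (seg w k (n-1-k)))) + (fert (seg w 0 (d+1)) * fert (seg w (d+1) (n-1-(d+1)))) := by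
    have h1 : ∀ j ∈ Finset.Ico (n-t) (n-1), (fert (seg w 0 (d+1) ++ seg w (j+1) (n-1-j)) * fert (seg w (d+1) (j-d-1))) =
        (∑ k ∈ Finset.range (d+1), fert (seg w 0 k) * (fert (seg w k (d+1-k) ++ seg w (j+1) (n-2-j)) * fert (seg w (d+1) (j-d-1))))
        + ∑ k ∈ Finset.Ico (j+1) n, fert (seg w 0 (d+1) ++ seg w (j+1) (k-1-j)) * fert (seg w (d+1) (j-d-1)) * fert (seg w k (n-1-k)) := by
      intro j hj
      rw [Finset.mem_Ico] at hj
      rw [hU j (by omega) (by omega), add_mul, Finset.sum_mul, Finset.sum_mul]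
      congr 1
      · exact Finset.sum_congr rfl (fun k hk => mul_assoc _ _ _)
      · exact Finset.sum_congr rfl (fun k hk => mul_right_comm _ _ _)
    calc (∑ j ∈ Finset.Ico (n-t) n, fert (seg w 0 (d+1) ++ seg w (j+1) (n-1-j)) * fert (seg w (d+1) (j-d-1)))
        = (∑ j ∈ Finset.Ico (n-t) (n-1), fert (seg w 0 (d+1) ++ seg w (j+1) (n-1-j)) * fert (seg w (d+1) (j-d-1))) + (fert (seg w 0 (d+1) ++ seg w (n-1+1) (n-1-(n-1))) * fert (seg w (d+1) (n-1-d-1))) := by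
          rw [hIco, Finset.sum_Ico_succ_top (show n-t ≤ n-1 by omega)]
      _ = (∑ j ∈ Finset.Ico (n-t) (n-1),
            ((∑ k ∈ Finset.range (d+1), fert (seg w 0 k) * (fert (seg w k (d+1-k) ++ seg w (j+1) (n-2-j)) * fert (seg w (d+1) (j-d-1))))
            + ∑ k ∈ Finset.Ico (j+1) n, fert (seg w 0 (d+1) ++ seg w (j+1) (k-1-j)) * fert (seg w (d+1) (j-d-1)) * fert (seg w k (n-1-k)))) + (fert (seg w 0 (d+1) ++ seg w (n-1+1) (n-1-(n-1))) * fert (seg w (d+1) (n-1-d-1))) := by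
          rw [Finset.sum_congr rfl h1]
      _ = ((∑ j ∈ Finset.Ico (n-t) (n-1), ∑ k ∈ Finset.range (d+1), fert (seg w 0 k) * (fert (seg w k (d+1-k) ++ seg w (j+1) (n-2-j)) * fert (seg w (d+1) (j-d-1)))) + (∑ j ∈ Finset.Ico (n-t) (n-1), ∑ k ∈ Finset.Ico (j+1) n, fert (seg w 0 (d+1) ++ seg w (j+1) (k-1-j)) * fert (seg w (d+1) (j-d-1)) * fert (seg w k (n-1-k)))) + (fert (seg w 0 (d+1) ++ seg w (n-1+1) (n-1-(n-1))) * fert (seg w (d+1) (n-1-d-1))) := by rw [Finset.sum_add_distrib]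
      _ = ((∑ j ∈ Finset.Ico (n-t) (n-1), ∑ k ∈ Finset.range (d+1), fert (seg w 0 k) * (fert (seg w k (d+1-k) ++ seg w (j+1) (n-2-j)) * fert (seg w (d+1) (j-d-1)))) + (∑ j ∈ Finset.Ico (n-t) n, ∑ k ∈ Finset.Ico (j+1) n, fert (seg w 0 (d+1) ++ seg w (j+1) (k-1-j)) * fert (seg w (d+1) (j-d-1)) * fert (seg w k (n-1-k)))) + (fert (seg w 0 (d+1)) * fert (seg w (d+1) (n-1-(d+1)))) := by rw [hE3ext, hM]
  rw [hLHS, hRHS]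
  ring

/-- The Decomposition Lemma: if `d` is a tail-bound descent of `π ∈ Sₙ` (0-indexed
position here), then `|s⁻¹(π)| = Σ_{H ∈ SW_d(π)} |s⁻¹(π_U^H)| · |s⁻¹(π_S^H)|`, where the
hooks in `SW_d(π)` correspond to the positions `j > d` with `π_d < π_j` that serve as
northeast endpoints. -/
theorem stmt19 (n : ℕ) (π : List ℕ) (hπ : π.Perm (List.range' 1 n))
    (d : ℕ) (hd : d + 1 < n) (hdesc : π.getD (d + 1) 0 < π.getD d 0)
    (htb : ∀ j, d < j → j < n → π.getD d 0 < π.getD j 0 → n - tailLen n π ≤ j) :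
    fert π = ∑ j ∈ Finset.Ico (d + 1) n,
      if π.getD d 0 < π.getD j 0 then
        fert (π.take (d + 1) ++ π.drop (j + 1)) * fert ((π.drop (d + 1)).take (j - d - 1))
      else 0 := by
  have hw : π.length = n := by rw [hπ.length_eq, List.length_range']
  have hnd : π.Nodup := hπ.nodup_iff.mpr (List.nodup_range' (s := 1) (n := n))
  have hval : ∀ i, i < n → 1 ≤ π.getD i 0 ∧ π.getD i 0 ≤ n := by
    intro i hi
    have hmem : π.getD i 0 ∈ π := getD_mem (by omega)
    have h2 := hπ.subset hmem
    rw [List.mem_range'_1] at h2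
    omega
  set t := tailLen n π with htdef
  have ht : t ≤ n := by
    rw [htdef]
    simp only [tailLen]
    exact Nat.sInf_le (Or.inl rfl)
  have htail : ∀ i, n - t ≤ i → i < n → π.getD i 0 = i + 1 := by
    intro i h1 h2
    have hℓ : n - 1 - i < t := by omega
    have hnotin : (n - 1 - i) ∉ {ℓ : ℕ | ℓ = n ∨ π.getD (n - ℓ - 1) 0 ≠ n - ℓ} := by
      intro hin
      have hle := Nat.sInf_le hin
      rw [htdef] at hℓ
      simp only [tailLen] at hℓ
      omega
    simp only [Set.mem_setOf_eq, not_or, not_not] at hnotin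
    obtain ⟨h3, h4⟩ := hnotin
    have e1 : n - (n - 1 - i) - 1 = i := by omega
    have e2 : n - (n - 1 - i) = i + 1 := by omega
    rw [e1, e2] at h4
    exact h4
  have hnontail : ∀ i, i < n - t → π.getD i 0 ≤ n - t := by
    intro i hi
    by_contra hcon
    push_neg at hcon
    have hv := hval i (by omega)
    have hj : π.getD (π.getD i 0 - 1) 0 = π.getD i 0 := by
      rw [htail (π.getD i 0 - 1) (by omega) (by omega)]
      omega
    exact (nodup_getD_ne hnd (show i ≠ π.getD i 0 - 1 by omega) (by omega) (by omega)) hj.symm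
  have H2 : ∀ i j, i < n - t → n - t ≤ j → j < n → π.getD i 0 < π.getD j 0 := by
    intro i j h1 h2 h3
    have := hnontail i h1
    rw [htail j h2 h3]
    omega
  have H3 : ∀ i j, n - t ≤ i → i < j → j < n → π.getD i 0 < π.getD j 0 := by
    intro i j h1 h2 h3
    rw [htail i h1 (by omega), htail j (by omega) h3]
    omega
  have hkey := genDecomp n π t d hw hnd ht H2 H3 hd hdesc htb
  rw [hkey]
  have hd1t : d + 1 ≤ n - t := by
    by_contra hcon
    push_neg at hcon
    rcases le_or_gt (n - t) d with hle | hlt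
    · exact absurd (H3 d (d+1) hle (by omega) hd) (by omega)
    · exact absurd (H2 d (d+1) (by omega) (by omega) hd) (by omega)
  rw [← Finset.sum_Ico_consecutive
      (fun j => if π.getD d 0 < π.getD j 0 then
        fert (π.take (d + 1) ++ π.drop (j + 1)) * fert ((π.drop (d + 1)).take (j - d - 1))
      else 0)
      (show d + 1 ≤ n - t by omega) (show n - t ≤ n by omega)]
  have hzero : (∑ j ∈ Finset.Ico (d+1) (n-t),
      if π.getD d 0 < π.getD j 0 then
        fert (π.take (d + 1) ++ π.drop (j + 1)) * fert ((π.drop (d + 1)).take (j - d - 1))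
      else 0) = 0 := by
    refine Finset.sum_eq_zero (fun j hj => ?_)
    rw [Finset.mem_Ico] at hj
    rw [if_neg]
    intro hlt
    have := htb j (by omega) (by omega) hlt
    omega
  rw [hzero, zero_add]
  refine Finset.sum_congr rfl (fun j hj => ?_)
  rw [Finset.mem_Ico] at hj
  rw [if_pos (H2 d j (by omega) (by omega) (by omega))]
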